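/- Let F be submodular with F(∅)=0 and f its Lovász extension. Then min over A ⊆ V of F(A) equals min over w ∈ [0,1]^p of f(w). -/

import Mathlib

/-- The Lovász extension of a set-function `F`, defined via a nondecreasing
ordering `σ = Tuple.sort w` of the components of `w`. -/
noncomputable def lovasz {p : ℕ} (F : Finset (Fin p) → ℝ) (w : Fin p → ℝ) : ℝ :=
  ∑ k : Fin p, w (Tuple.sort w k) *
    (F ((Finset.Ici k).image (Tuple.sort w)) - F ((Finset.Ioi k).image (Tuple.sort w)))

def Submodular {p : ℕ} (F : Finset (Fin p) → ℝ) : Prop :=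
  ∀ A B : Finset (Fin p), F (A ∪ B) + F (A ∩ B) ≤ F A + F B

/- auxiliary definitions -/
noncomputable def gseq {p : ℕ} (w : Fin p → ℝ) (k : ℕ) : ℝ :=
  if h : k < p then w (Tuple.sort w ⟨k, h⟩) else 1

noncomputable def Gseq {p : ℕ} (w : Fin p → ℝ) : ℕ → ℝ
  | 0 => 0
  | (k+1) => gseq w k

noncomputable def Aset {p : ℕ} (w : Fin p → ℝ) (k : ℕ) : Finset (Fin p) :=
  (Finset.univ.filter (fun j : Fin p => k ≤ (j : ℕ))).image (Tuple.sort w)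

lemma abel_aux (G H : ℕ → ℝ) : ∀ n : ℕ,
    ∑ k ∈ Finset.range n, G (k+1) * (H k - H (k+1)) =
      ∑ k ∈ Finset.range n, (G (k+1) - G k) * H k + G 0 * H 0 - G n * H n := by
  intro n
  induction n with
  | zero => simp
  | succ n ih =>
    rw [Finset.sum_range_succ, Finset.sum_range_succ, ih]
    ring

lemma Aset_p {p : ℕ} (w : Fin p → ℝ) : Aset w p = ∅ := by
  unfold Aset
  rw [Finset.filter_false_of_mem, Finset.image_empty]
  intro j _
  exact Nat.not_le.2 j.2

lemma lovasz_eq {p : ℕ} (F : Finset (Fin p) → ℝ) (h0 : F ∅ = 0) (w : Fin p → ℝ) :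
    lovasz F w = ∑ k ∈ Finset.range p, (Gseq w (k+1) - Gseq w k) * F (Aset w k) := by
  have h1 : lovasz F w = ∑ k ∈ Finset.range p, gseq w k * (F (Aset w k) - F (Aset w (k+1))) := by
    rw [lovasz, Finset.sum_range]
    apply Finset.sum_congr rfl
    intro j _
    have hk : (j : ℕ) < p := j.2
    have e1 : Finset.Ici (⟨(j:ℕ), hk⟩ : Fin p) = Finset.univ.filter (fun i : Fin p => (j:ℕ) ≤ (i : ℕ)) := by
      ext i; simp only [Finset.mem_Ici, Finset.mem_filter, Finset.mem_univ, true_and, Fin.le_def]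
    have e2 : Finset.Ioi (⟨(j:ℕ), hk⟩ : Fin p) = Finset.univ.filter (fun i : Fin p => (j:ℕ) + 1 ≤ (i : ℕ)) := by
      ext i; simp only [Finset.mem_Ioi, Finset.mem_filter, Finset.mem_univ, true_and, Fin.lt_def, Nat.succ_le_iff]
    rw [Fin.eta] at e1 e2
    rw [Aset, Aset, ← e1, ← e2, gseq, dif_pos hk, Fin.eta]
  have h2 : ∀ k ∈ Finset.range p, gseq w k * (F (Aset w k) - F (Aset w (k+1))) =
      Gseq w (k+1) * (F (Aset w k) - F (Aset w (k+1))) := by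
    intro k _; rfl
  rw [h1, Finset.sum_congr rfl h2, abel_aux (Gseq w) (fun k => F (Aset w k))]
  simp [Gseq, Aset_p, h0]

lemma gseq_mono {p : ℕ} (w : Fin p → ℝ) {k l : ℕ} (hkl : k ≤ l) (hl : l < p) :
    gseq w k ≤ gseq w l := by
  have hk : k < p := lt_of_le_of_lt hkl hl
  rw [gseq, gseq, dif_pos hk, dif_pos hl]
  exact Tuple.monotone_sort w (show (⟨k, hk⟩ : Fin p) ≤ ⟨l, hl⟩ from hkl)

/-- Lower bound: for `w` in the cube, `m ≤ lovasz F w` when `m` is a lower bound on `F`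
and `m ≤ 0`. -/
lemma lovasz_lower {p : ℕ} (F : Finset (Fin p) → ℝ) (h0 : F ∅ = 0) (m : ℝ)
    (hm : ∀ A : Finset (Fin p), m ≤ F A) (w : Fin p → ℝ)
    (hw : ∀ i, w i ∈ Set.Icc (0 : ℝ) 1) : m ≤ lovasz F w := by
  have hm0 : m ≤ 0 := h0 ▸ hm ∅
  rw [lovasz_eq F h0 w]
  have hc : ∀ k ∈ Finset.range p, 0 ≤ Gseq w (k+1) - Gseq w k := by
    intro k hk
    rw [Finset.mem_range] at hk
    cases k with
    | zero =>
      simp only [Gseq, gseq, dif_pos hk, sub_zero]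
      exact (hw _).1
    | succ n =>
      have : Gseq w (n+1) ≤ Gseq w (n+2) := gseq_mono w (Nat.le_succ n) hk
      linarith
  have hstep : ∀ k ∈ Finset.range p,
      (Gseq w (k+1) - Gseq w k) * m ≤ (Gseq w (k+1) - Gseq w k) * F (Aset w k) := by
    intro k hk
    exact mul_le_mul_of_nonneg_left (hm _) (hc k hk)
  calc m = 1 * m := (one_mul m).symm
    _ ≤ Gseq w p * m := by
        apply mul_le_mul_of_nonpos_right _ hm0
        cases p with
        | zero => simp [Gseq]
        | succ n =>
          show gseq w n ≤ 1
          rw [gseq, dif_pos (Nat.lt_succ_self n)]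
          exact (hw _).2
    _ = ∑ k ∈ Finset.range p, (Gseq w (k+1) - Gseq w k) * m := by
        rw [← Finset.sum_mul, Finset.sum_range_sub (Gseq w)]
        simp [Gseq]
    _ ≤ _ := Finset.sum_le_sum hstep

/-- The Lovász extension of an indicator vector recovers the set function. -/
lemma lovasz_indicator {p : ℕ} (F : Finset (Fin p) → ℝ) (h0 : F ∅ = 0)
    (A : Finset (Fin p)) :
    lovasz F (fun i => if i ∈ A then (1:ℝ) else 0) = F A := by
  classical
  set w : Fin p → ℝ := fun i => if i ∈ A then (1:ℝ) else 0 with hw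
  have hval : ∀ k, k < p → gseq w k = 0 ∨ gseq w k = 1 := by
    intro k hk
    rw [gseq, dif_pos hk]
    by_cases h : Tuple.sort w ⟨k, hk⟩ ∈ A <;> simp [hw, h] <;> tauto
  have hmem : ∀ i : Fin p, i ∈ A ↔ w i = 1 := by
    intro i; by_cases h : i ∈ A <;> simp [hw, h]
  have hsig : ∀ j : Fin p, w (Tuple.sort w j) = gseq w (j : ℕ) := by
    intro j; rw [gseq, dif_pos j.2, Fin.eta]
  rw [lovasz_eq F h0 w]
  by_cases hex : ∃ k, k < p ∧ gseq w k = 1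
  · obtain ⟨k0, hk0p, hg1, hmin'⟩ : ∃ k0, k0 < p ∧ gseq w k0 = 1 ∧ ∀ k < k0, gseq w k ≠ 1 :=
      ⟨Nat.find hex, (Nat.find_spec hex).1, (Nat.find_spec hex).2,
        fun k hk h => Nat.find_min hex hk ⟨hk.trans (Nat.find_spec hex).1, h⟩⟩
    have hmin : ∀ k, k < k0 → k < p → gseq w k = 0 := by
      intro k hk hkp
      exact (hval k hkp).resolve_right (hmin' k hk)
    have hone : ∀ k, k0 ≤ k → k < p → gseq w k = 1 := by
      intro k hk hkp
      rcases hval k hkp with h | h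
      · have := gseq_mono w hk hkp
        rw [h, hg1] at this; linarith
      · exact h
    rw [Finset.sum_eq_single_of_mem k0 (Finset.mem_range.2 hk0p)]
    · have hG0 : Gseq w k0 = 0 := by
        cases k0 with
        | zero => rfl
        | succ n =>
          show gseq w n = 0
          exact hmin n (Nat.lt_succ_self n) (Nat.lt_of_succ_lt hk0p)
      have hAeq : Aset w k0 = A := by
        ext i
        simp only [Aset, Finset.mem_image, Finset.mem_filter, Finset.mem_univ, true_and]
        constructor
        · rintro ⟨j, hj, rfl⟩
          rw [hmem, hsig]
          exact hone _ hj j.2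
        · intro hi
          refine ⟨(Tuple.sort w)⁻¹ i, ?_, (Equiv.eq_symm_apply _).mp rfl⟩
          have h1 : gseq w (((Tuple.sort w)⁻¹ i : Fin p) : ℕ) = 1 := by
            rw [← hsig, Equiv.Perm.inv_def, Equiv.apply_symm_apply]
            exact (hmem i).1 hi
          by_contra hlt
          rw [hmin _ (Nat.lt_of_not_le hlt) ((Tuple.sort w)⁻¹ i).2] at h1
          norm_num at h1
      show (Gseq w (k0+1) - Gseq w k0) * F (Aset w k0) = F A
      rw [hAeq, hG0]
      show (gseq w k0 - 0) * F A = F A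
      rw [hg1]; ring
    · intro k hk hne
      rw [Finset.mem_range] at hk
      rcases lt_or_gt_of_ne hne with h | h
      · have h1 : Gseq w (k+1) = 0 := hmin k h hk
        have h2 : Gseq w k = 0 := by
          cases k with
          | zero => rfl
          | succ n => exact hmin n (Nat.lt_of_succ_lt h) (Nat.lt_of_succ_lt hk)
        rw [h1, h2]; ring
      · have h1 : Gseq w (k+1) = 1 := hone k (Nat.le_of_lt h) hk
        have h2 : Gseq w k = 1 := by
          cases k with
          | zero => exact absurd h (Nat.not_lt_zero k0)
          | succ n => exact hone n (Nat.lt_succ_iff.1 h) (Nat.lt_of_succ_lt hk)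
        rw [h1, h2]; ring
  · push_neg at hex
    have hA : A = ∅ := by
      by_contra hne
      obtain ⟨i, hi⟩ := Finset.nonempty_iff_ne_empty.2 hne
      have h1 : gseq w (((Tuple.sort w)⁻¹ i : Fin p) : ℕ) = 1 := by
        rw [← hsig, Equiv.Perm.inv_def, Equiv.apply_symm_apply]
        exact (hmem i).1 hi
      exact (hex _ ((Tuple.sort w)⁻¹ i).2 h1).elim
    rw [hA, h0, Finset.sum_eq_zero]
    intro k hk
    rw [Finset.mem_range] at hk
    have h1 : Gseq w (k+1) = 0 := (hval k hk).resolve_right (hex k hk)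
    have h2 : Gseq w k = 0 := by
      cases k with
      | zero => rfl
      | succ n =>
        exact (hval n (Nat.lt_of_succ_lt hk)).resolve_right (hex n (Nat.lt_of_succ_lt hk))
    rw [h1, h2]; ring

/-- Minimizing a submodular function over all subsets is the same as minimizing
its Lovász extension over the unit hypercube. -/
theorem submodular_min_eq_lovasz_min_cube {p : ℕ} (F : Finset (Fin p) → ℝ)
    (hF : Submodular F) (h0 : F ∅ = 0) :
    IsLeast {x : ℝ | ∃ A : Finset (Fin p), x = F A}
      (sInf {x : ℝ | ∃ w : Fin p → ℝ, (∀ i, w i ∈ Set.Icc (0 : ℝ) 1) ∧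
        x = lovasz F w}) := by
  classical
  set S : Set ℝ := {x : ℝ | ∃ w : Fin p → ℝ, (∀ i, w i ∈ Set.Icc (0 : ℝ) 1) ∧
        x = lovasz F w} with hS
  obtain ⟨A0, -, hA0⟩ := Finset.exists_min_image (Finset.univ : Finset (Finset (Fin p))) F
    ⟨∅, Finset.mem_univ ∅⟩
  have hA0min : ∀ A : Finset (Fin p), F A0 ≤ F A := fun A => hA0 A (Finset.mem_univ A)
  have hind : ∀ A : Finset (Fin p), F A ∈ S := by
    intro A
    refine ⟨fun i => if i ∈ A then (1:ℝ) else 0, fun i => ?_, (lovasz_indicator F h0 A).symm⟩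
    by_cases h : i ∈ A <;> simp [h]
  have hlb : ∀ x ∈ S, F A0 ≤ x := by
    rintro x ⟨w, hw, rfl⟩
    exact lovasz_lower F h0 (F A0) hA0min w hw
  have hInf : sInf S = F A0 := by
    apply le_antisymm
    · exact csInf_le ⟨F A0, hlb⟩ (hind A0)
    · exact le_csInf ⟨F A0, hind A0⟩ hlb
  rw [hInf]
  exact ⟨⟨A0, rfl⟩, by rintro x ⟨A, rfl⟩; exact hA0min A⟩
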